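/- Let P have CDF F, fix λ > 0, set C = 1 − e^{−1/λ}, and define φ_λ(a) = F(a)(1 − F(a)) C / (1 − C F(a)). If F is continuous and strictly increasing from 0 to 1 on ℝ (i.e., F is a homeomorphism onto (0,1) wherever defined with limits 0 and −∞ and 1 at +∞), then φ_λ attains its supremum over ℝ at the unique point a* = F^{−1}(1/(1 + e^{−1/(2λ)})). -/
import Mathlib


open Set Filter

theorem stmt_9 (F : ℝ → ℝ) (hcont : Continuous F) (hmono : StrictMono F)
    (h0 : Tendsto F atBot (nhds 0)) (h1 : Tendsto F atTop (nhds 1))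
    (lam : ℝ) (hlam : 0 < lam)
    (C : ℝ) (hC : C = 1 - Real.exp (-1 / lam))
    (φ : ℝ → ℝ) (hφ : ∀ a, φ a = F a * (1 - F a) * C / (1 - C * F a)) :
    ∃! astar : ℝ, F astar = 1 / (1 + Real.exp (-1 / (2 * lam))) ∧ ∀ a : ℝ, φ a ≤ φ astar := by
  set q := Real.exp (-1 / (2 * lam)) with hqdef
  have hq0 : 0 < q := Real.exp_pos _
  have hq1 : q < 1 := by
    rw [hqdef]
    exact Real.exp_lt_one_iff.mpr (div_neg_of_neg_of_pos (by norm_num) (by linarith))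
  have hCq : C = 1 - q * q := by
    rw [hC, hqdef, ← Real.exp_add]
    congr 2
    field_simp
    ring
  -- F values are in (0,1)
  have hFpos : ∀ a, 0 < F a := by
    intro a
    have h1' : F (a - 1) < F a := hmono (by linarith)
    have h2' : 0 ≤ F (a - 1) := by
      refine le_of_tendsto h0 ?_
      filter_upwards [eventually_le_atBot (a - 1)] with x hx
      exact (hmono.le_iff_le).mpr hx
    linarith
  have hFlt1 : ∀ a, F a < 1 := by
    intro a
    have h1' : F a < F (a + 1) := hmono (by linarith)
    have h2' : F (a + 1) ≤ 1 := by
      refine ge_of_tendsto h1 ?_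
      filter_upwards [eventually_ge_atTop (a + 1)] with x hx
      exact (hmono.le_iff_le).mpr hx
    linarith
  -- the target value
  set t : ℝ := 1 / (1 + q) with htdef
  have ht0 : 0 < t := by positivity
  have ht1 : t < 1 := by
    rw [htdef, div_lt_one (by linarith)]
    linarith
  -- existence of astar
  obtain ⟨a₀, ha₀⟩ : ∃ a, F a < t := ((h0.eventually (gt_mem_nhds ht0)).exists)
  obtain ⟨b₀, hb₀⟩ : ∃ b, t < F b := ((h1.eventually (lt_mem_nhds ht1)).exists)
  have hab : a₀ ≤ b₀ := le_of_lt (hmono.lt_iff_lt.mp (lt_trans ha₀ hb₀))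
  obtain ⟨astar, _, hFast⟩ : ∃ x ∈ Icc a₀ b₀, F x = t := by
    have := intermediate_value_Icc hab hcont.continuousOn
    have ht : t ∈ Icc (F a₀) (F b₀) := ⟨le_of_lt ha₀, le_of_lt hb₀⟩
    obtain ⟨x, hx, hfx⟩ := this ht
    exact ⟨x, hx, hfx⟩
  refine ⟨astar, ⟨hFast, ?_⟩, ?_⟩
  · intro a
    rw [hφ a, hφ astar, hFast]
    have h1q : (1 : ℝ) + q ≠ 0 := by positivity
    have hden : 1 - C * t = q := by
      rw [hCq, htdef]; field_simp; ring
    have hval : t * (1 - t) * C / (1 - C * t) = (1 - q) / (1 + q) := by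
      rw [hden, hCq, htdef]
      field_simp
      ring
    rw [hval]
    set u := F a with hu
    have hu0 : 0 < u := hFpos a
    have hu1 : u < 1 := hFlt1 a
    have hd1 : 0 < 1 - C * u := by
      rw [hCq]; nlinarith
    rw [div_le_div_iff₀ hd1 (by linarith : (0:ℝ) < 1 + q), hCq]
    nlinarith [mul_nonneg (by linarith : (0:ℝ) ≤ 1 - q) (sq_nonneg ((1 + q) * u - 1))]
  · rintro a' ⟨ha', -⟩
    exact hmono.injective (by rw [ha', hFast])
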